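/- Let Λ_2 ⊂ Λ_1 be nested full-rank lattices in R^n with index N_0 = ν(Λ_2)/ν(Λ_1), and let C = ∪_{λ ∈ V_{Λ_2}(0) ∩ Λ_1} V_{Λ_1}(λ). Then Σ_{λ ∈ V_{Λ_2}(0) ∩ Λ_1} ||λ||^2 = n·N_0·( G(C)·ν(Λ_2)^{2/n} − G_{Λ_1}·ν(Λ_1)^{2/n} ), where G(S) = (∫_S ||x||^2 dx)/(n·ν(S)^{1+2/n}) is the normalized second moment and G_{Λ_1} = G(V_{Λ_1}(0)). -/

import Mathlib

open MeasureTheory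
open scoped Pointwise RealInnerProductSpace

/-- Normalized second moment `G(S) = (∫_S ‖x‖² dx)/(n·ν(S)^{1+2/n})`. -/
noncomputable def nsm (n : ℕ) (S : Set (EuclideanSpace ℝ (Fin n))) : ℝ :=
  (∫ x in S, ‖x‖ ^ 2) / (n * (volume S).toReal ^ ((1 : ℝ) + 2 / n))

lemma mem_image_add_iff {E : Type*} [AddCommGroup E] (l x : E) (W : Set E) :
    x ∈ (l + ·) '' W ↔ -l + x ∈ W := by
  constructor
  · rintro ⟨v, hv, rfl⟩; simpa
  · intro h; exact ⟨-l + x, h, by simp⟩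

lemma vadd_subgroup_set_eq {E : Type*} [AddCommGroup E] (Λ : AddSubgroup E) (g : Λ)
    (W : Set E) : g +ᵥ W = ((g : E) + ·) '' W := by
  ext x
  rw [Set.mem_vadd_set]
  constructor
  · rintro ⟨y, hy, rfl⟩; exact ⟨y, hy, rfl⟩
  · rintro ⟨y, hy, rfl⟩; exact ⟨y, hy, rfl⟩

/-- For nested lattices `Λ₂ ⊂ Λ₁` with fundamental (Voronoi) cells `V₁, V₂`
(translates partition `ℝⁿ`, and `∫_{V₁} x dx = 0`), with `S = V₂ ∩ Λ₁` of cardinality `N₀`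
and `C = ∪_{λ∈S} (λ + V₁)`:
`Σ_{λ∈S} ‖λ‖² = n·N₀·(G(C)·ν(Λ₂)^{2/n} − G(V₁)·ν(Λ₁)^{2/n})`. -/
theorem stmt6 (n : ℕ) (hn : 0 < n)
    (Λ1 Λ2 : AddSubgroup (EuclideanSpace ℝ (Fin n))) (hnest : Λ2 ≤ Λ1)
    (V1 V2 : Set (EuclideanSpace ℝ (Fin n)))
    (hV1m : MeasurableSet V1) (hV2m : MeasurableSet V2)
    (hpart1 : ∀ x, ∃! l, l ∈ Λ1 ∧ x ∈ (l + ·) '' V1)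
    (hpart2 : ∀ x, ∃! l, l ∈ Λ2 ∧ x ∈ (l + ·) '' V2)
    (hcent : (∫ x in V1, x) = 0)
    (hvol1 : 0 < volume V1) (hvol1' : volume V1 < ⊤) (hvol2 : volume V2 < ⊤)
    (hbdd1 : Bornology.IsBounded V1) (hbdd2 : Bornology.IsBounded V2)
    (hint1 : IntegrableOn (fun x => ‖x‖ ^ 2) V1 volume)
    (S : Finset (EuclideanSpace ℝ (Fin n))) (hS : (S : Set (EuclideanSpace ℝ (Fin n))) = V2 ∩ (Λ1 : Set (EuclideanSpace ℝ (Fin n)))) :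
    ∑ l ∈ S, ‖l‖ ^ 2 =
      n * S.card *
        (nsm n (⋃ l ∈ S, (l + ·) '' V1) * (volume V2).toReal ^ ((2 : ℝ) / n)
          - nsm n V1 * (volume V1).toReal ^ ((2 : ℝ) / n)) := by
  classical
  have hSmem : ∀ l : EuclideanSpace ℝ (Fin n), l ∈ S ↔ l ∈ V2 ∧ l ∈ Λ1 := by
    intro l
    constructor
    · intro h
      have h2 : l ∈ V2 ∩ (Λ1 : Set (EuclideanSpace ℝ (Fin n))) := hS ▸ Finset.mem_coe.mpr h
      exact ⟨h2.1, h2.2⟩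
    · intro h
      have h2 : l ∈ (S : Set (EuclideanSpace ℝ (Fin n))) := hS ▸ (Set.mem_inter h.1 h.2)
      exact Finset.mem_coe.mp h2
  set T : EuclideanSpace ℝ (Fin n) → Set (EuclideanSpace ℝ (Fin n)) :=
    fun l => (l + ·) '' V1 with hTdef
  have hTeq : ∀ l, T l = (fun x => -l + x) ⁻¹' V1 := by
    intro l; ext x; exact mem_image_add_iff l x V1
  have hTm : ∀ l, MeasurableSet (T l) := by
    intro l; rw [hTeq]; exact hV1m.preimage (measurable_const_add (-l))
  have hTvol : ∀ l, volume (T l) = volume V1 := by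
    intro l; rw [hTeq, measure_preimage_add]
  -- disjointness of Λ1-translates
  have hdisj : ∀ l ∈ Λ1, ∀ l' ∈ Λ1, l ≠ l' → Disjoint (T l) (T l') := by
    intro l hl l' hl' hne
    rw [Set.disjoint_left]
    intro x hx hx'
    exact hne ((hpart1 x).unique ⟨hl, hx⟩ ⟨hl', hx'⟩)
  -- countability of Λ1 and Λ2
  haveI hcount1 : Countable Λ1 := by
    have hco := MeasureTheory.Measure.countable_meas_pos_of_disjoint_iUnion
      (μ := (volume : Measure (EuclideanSpace ℝ (Fin n))))
      (As := fun g : Λ1 => T (g : EuclideanSpace ℝ (Fin n)))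
      (fun g => hTm _)
      (fun g g' hgg' => hdisj _ g.2 _ g'.2 (fun h => hgg' (Subtype.ext h)))
    have huniv : {i : Λ1 | 0 < volume (T (i : EuclideanSpace ℝ (Fin n)))} = Set.univ :=
      Set.eq_univ_of_forall (fun i => by
        simp only [Set.mem_setOf_eq, hTvol]; exact hvol1)
    rw [huniv] at hco
    exact Set.countable_univ_iff.mp hco
  haveI hcount2 : Countable Λ2 :=
    Function.Injective.countable (AddSubgroup.inclusion_injective hnest)
  -- fundamental domain V2 for Λ2
  have hfd2 : IsAddFundamentalDomain Λ2 V2 volume := by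
    refine ⟨hV2m.nullMeasurableSet, ?_, ?_⟩
    · refine Filter.Eventually.of_forall fun x => ?_
      obtain ⟨l, ⟨hl, hx⟩, -⟩ := hpart2 x
      exact ⟨⟨-l, neg_mem hl⟩, (mem_image_add_iff l x V2).mp hx⟩
    · intro g g' hgg'
      apply Disjoint.aedisjoint
      show Disjoint (g +ᵥ V2) (g' +ᵥ V2)
      rw [vadd_subgroup_set_eq, vadd_subgroup_set_eq, Set.disjoint_left]
      intro x hx hx'
      exact hgg' (Subtype.ext ((hpart2 x).unique ⟨g.2, hx⟩ ⟨g'.2, hx'⟩))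
  -- fundamental domain C for Λ2
  set C : Set (EuclideanSpace ℝ (Fin n)) := ⋃ l ∈ S, T l with hCdef
  have hCm : MeasurableSet C := S.measurableSet_biUnion (fun l _ => hTm l)
  have hfdC : IsAddFundamentalDomain Λ2 C volume := by
    refine ⟨hCm.nullMeasurableSet, ?_, ?_⟩
    · refine Filter.Eventually.of_forall fun x => ?_
      obtain ⟨l1, ⟨hl1, hx1⟩, -⟩ := hpart1 x
      obtain ⟨lam, ⟨hlam, hx2⟩, -⟩ := hpart2 l1
      have hs0V2 : -lam + l1 ∈ V2 := (mem_image_add_iff lam l1 V2).mp hx2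
      have hs0L1 : -lam + l1 ∈ Λ1 := add_mem (neg_mem (hnest hlam)) hl1
      have hs0S : -lam + l1 ∈ S := (hSmem _).mpr ⟨hs0V2, hs0L1⟩
      refine ⟨⟨-lam, neg_mem hlam⟩, Set.mem_biUnion hs0S ?_⟩
      show -lam + x ∈ T (-lam + l1)
      rw [hTdef]
      rw [mem_image_add_iff]
      have habel : -(-lam + l1) + (-lam + x) = -l1 + x := by abel
      rw [habel]
      exact (mem_image_add_iff l1 x V1).mp hx1
    · intro g g' hgg'
      apply Disjoint.aedisjoint
      show Disjoint (g +ᵥ C) (g' +ᵥ C)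
      rw [vadd_subgroup_set_eq, vadd_subgroup_set_eq, Set.disjoint_left]
      intro x hx hx'
      obtain ⟨y, hy, rfl⟩ := hx
      obtain ⟨s, hsS, hsy⟩ : ∃ s ∈ S, y ∈ T s := by
        simpa [hCdef, Set.mem_iUnion] using hy
      obtain ⟨y', hy', hyy'⟩ := hx'
      obtain ⟨s', hs'S, hs'y⟩ : ∃ s' ∈ S, y' ∈ T s' := by
        simpa [hCdef, Set.mem_iUnion] using hy'
      have hx1 : (g : EuclideanSpace ℝ (Fin n)) + y ∈ T ((g : EuclideanSpace ℝ (Fin n)) + s) := by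
        rw [hTdef, mem_image_add_iff]
        have habel : -((g : EuclideanSpace ℝ (Fin n)) + s)
            + ((g : EuclideanSpace ℝ (Fin n)) + y) = -s + y := by abel
        rw [habel]
        exact (mem_image_add_iff s y V1).mp hsy
      have hx2 : (g : EuclideanSpace ℝ (Fin n)) + y
          ∈ T ((g' : EuclideanSpace ℝ (Fin n)) + s') := by
        have hyy2 : (g' : EuclideanSpace ℝ (Fin n)) + y' = (g : EuclideanSpace ℝ (Fin n)) + y := hyy'
        rw [← hyy2, hTdef, mem_image_add_iff]
        have habel : -((g' : EuclideanSpace ℝ (Fin n)) + s')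
            + ((g' : EuclideanSpace ℝ (Fin n)) + y') = -s' + y' := by abel
        rw [habel]
        exact (mem_image_add_iff s' y' V1).mp hs'y
      have hmem1 : (g : EuclideanSpace ℝ (Fin n)) + s ∈ Λ1 :=
        add_mem (hnest g.2) ((hSmem s).mp hsS).2
      have hmem2 : (g' : EuclideanSpace ℝ (Fin n)) + s' ∈ Λ1 :=
        add_mem (hnest g'.2) ((hSmem s').mp hs'S).2
      have heq : (g : EuclideanSpace ℝ (Fin n)) + s = (g' : EuclideanSpace ℝ (Fin n)) + s' :=
        (hpart1 _).unique ⟨hmem1, hx1⟩ ⟨hmem2, hx2⟩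
      have hp1 : ((g : EuclideanSpace ℝ (Fin n)) + s)
          ∈ ((g : EuclideanSpace ℝ (Fin n)) + ·) '' V2 :=
        ⟨s, ((hSmem s).mp hsS).1, rfl⟩
      have hp2 : ((g : EuclideanSpace ℝ (Fin n)) + s)
          ∈ ((g' : EuclideanSpace ℝ (Fin n)) + ·) '' V2 := by
        rw [heq]; exact ⟨s', ((hSmem s').mp hs'S).1, rfl⟩
      exact hgg' (Subtype.ext ((hpart2 _).unique ⟨g.2, hp1⟩ ⟨g'.2, hp2⟩))
  -- volume of C
  have hSpd : (S : Set (EuclideanSpace ℝ (Fin n))).PairwiseDisjoint T := by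
    intro a ha b hb hab
    exact hdisj a ((hSmem a).mp ha).2 b ((hSmem b).mp hb).2 hab
  have hvolC : volume C = S.card * volume V1 := by
    rw [hCdef, measure_biUnion_finset hSpd (fun l _ => hTm l)]
    simp [hTvol, Finset.sum_const]
  -- volume V2 = volume C
  have hv2C : volume V2 = volume C := hfd2.measure_eq hfdC
  -- S is nonempty
  have hSne : S.Nonempty := by
    obtain ⟨l, ⟨hl, hx⟩, -⟩ := hpart2 0
    have h1 : -l + 0 ∈ V2 := (mem_image_add_iff l 0 V2).mp hx
    exact ⟨-l + 0, (hSmem _).mpr ⟨h1, add_mem (neg_mem (hnest hl)) (zero_mem _)⟩⟩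
  -- integrability of the identity on V1
  have hid : IntegrableOn (fun x : EuclideanSpace ℝ (Fin n) => x) V1 volume := by
    obtain ⟨R, hR⟩ := hbdd1.exists_norm_le
    exact Measure.integrableOn_of_bounded hvol1'.ne
      measurable_id.aestronglyMeasurable
      ((ae_restrict_iff' hV1m).mpr (Filter.Eventually.of_forall hR))
  -- integral over each translate
  have hTint : ∀ l, ∫ x in T l, ‖x‖ ^ 2 =
      ‖l‖ ^ 2 * (volume V1).toReal + ∫ x in V1, ‖x‖ ^ 2 := by
    intro l
    have hmp : MeasurePreserving (fun x : EuclideanSpace ℝ (Fin n) => l + x) volume volume :=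
      measurePreserving_add_left volume l
    have hemb : MeasurableEmbedding (fun x : EuclideanSpace ℝ (Fin n) => l + x) :=
      (MeasurableEquiv.addLeft l).measurableEmbedding
    have h1 : ∫ x in T l, ‖x‖ ^ 2 = ∫ x in V1, ‖l + x‖ ^ 2 :=
      hmp.setIntegral_image_emb hemb _ _
    rw [h1]
    have hexp : ∀ x : EuclideanSpace ℝ (Fin n), ‖l + x‖ ^ 2
        = ‖l‖ ^ 2 + 2 * (⟪l, x⟫) + ‖x‖ ^ 2 := fun x => norm_add_sq_real l x
    rw [setIntegral_congr_fun hV1m (fun x _ => hexp x)]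
    have hic : IntegrableOn (fun _ : EuclideanSpace ℝ (Fin n) => ‖l‖ ^ 2) V1 volume :=
      (integrableOn_const_iff).mpr (Or.inr hvol1')
    have hii : IntegrableOn (fun x : EuclideanSpace ℝ (Fin n) => 2 * (⟪l, x⟫)) V1 volume :=
      (Integrable.const_inner (𝕜 := ℝ) l hid).const_mul (2:ℝ)
    have e1 : ∫ x in V1, (‖l‖ ^ 2 + 2 * (⟪l, x⟫) + ‖x‖ ^ 2)
        = (∫ x in V1, (‖l‖ ^ 2 + 2 * (⟪l, x⟫))) + ∫ x in V1, ‖x‖ ^ 2 :=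
      integral_add (hic.add hii) hint1
    have e2 : ∫ x in V1, (‖l‖ ^ 2 + 2 * (⟪l, x⟫))
        = (∫ _x in V1, (‖l‖ ^ 2 : ℝ)) + ∫ x in V1, 2 * (⟪l, x⟫) := integral_add hic hii
    have hzero : ∫ x in V1, 2 * (⟪l, x⟫) = 0 := by
      rw [integral_const_mul, integral_inner hid l, hcent, inner_zero_right, mul_zero]
    rw [e1, e2, hzero, setIntegral_const, smul_eq_mul, measureReal_def]
    ring
  -- integrability over translates
  have hTintegrable : ∀ l, IntegrableOn (fun x => ‖x‖ ^ 2) (T l) volume := by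
    intro l
    obtain ⟨R, hR⟩ := hbdd1.exists_norm_le
    refine Measure.integrableOn_of_bounded (M := (‖l‖ + R) ^ 2) ?_ ?_ ?_
    · rw [hTvol]; exact hvol1'.ne
    · exact (measurable_norm.pow_const 2).aestronglyMeasurable
    · refine (ae_restrict_iff' (hTm l)).mpr (Filter.Eventually.of_forall fun x hx => ?_)
      obtain ⟨v, hv, rfl⟩ := hx
      have hb : ‖l + v‖ ≤ ‖l‖ + R := le_trans (norm_add_le l v)
        (add_le_add (le_refl _) (hR v hv))
      have h0 : (0:ℝ) ≤ ‖l + v‖ := norm_nonneg _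
      rw [Real.norm_eq_abs, abs_of_nonneg (pow_nonneg h0 2)]
      exact pow_le_pow_left₀ h0 hb 2
  -- integral over C
  have hintC : ∫ x in C, ‖x‖ ^ 2 =
      (volume V1).toReal * ∑ l ∈ S, ‖l‖ ^ 2 + S.card * ∫ x in V1, ‖x‖ ^ 2 := by
    rw [hCdef, integral_biUnion_finset S (fun l _ => hTm l) hSpd
      (fun l _ => hTintegrable l)]
    rw [Finset.sum_congr rfl (fun l _ => hTint l)]
    rw [Finset.sum_add_distrib, ← Finset.sum_mul, Finset.sum_const, nsmul_eq_mul]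
    ring
  -- real-number bookkeeping
  have hν1pos : 0 < (volume V1).toReal := ENNReal.toReal_pos hvol1.ne' hvol1'.ne
  have hNpos : 0 < (S.card : ℝ) := by exact_mod_cast Finset.card_pos.mpr hSne
  have hvolCr : (volume C).toReal = (S.card : ℝ) * (volume V1).toReal := by
    rw [hvolC, ENNReal.toReal_mul, ENNReal.toReal_natCast]
  have hvolV2r : (volume V2).toReal = (S.card : ℝ) * (volume V1).toReal := by
    rw [hv2C, hvolCr]
  have hcpos : 0 < (S.card : ℝ) * (volume V1).toReal := mul_pos hNpos hν1pos
  simp only [nsm]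
  rw [hvolV2r, hintC, hvolCr]
  rw [Real.rpow_add hcpos, Real.rpow_add hν1pos, Real.rpow_one, Real.rpow_one]
  have he1 : ((S.card : ℝ) * (volume V1).toReal) ^ ((2:ℝ)/n) ≠ 0 :=
    (Real.rpow_pos_of_pos hcpos _).ne'
  have he2 : ((volume V1).toReal) ^ ((2:ℝ)/n) ≠ 0 :=
    (Real.rpow_pos_of_pos hν1pos _).ne'
  have hn' : (n:ℝ) ≠ 0 := Nat.cast_ne_zero.mpr hn.ne'
  field_simp
  ring
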